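/- Let C be a ℤ_p-chain complex with fundamental-domain bases as in the context. Give Hom(C^d, ℤ) the coboundary dual to the restricted boundary of C^d. Then {sσ : σ ∈ F_n} is a basis of C^d_n and {sσ* : σ ∈ F_n} is a basis of C^n_d (where σ* denotes the dual-basis cochain of σ with respect to the basis {t^kσ}), and the homomorphism γ : C*_d → Hom(C^d, ℤ) determined by γ(sσ*) = (sσ)* (the dual-basis functional of sσ with respect to the basis {sσ : σ ∈ F_n}) is an isomorphism of cochain complexes. Moreover, for every cochain φ ∈ C^n vanishing on t^kσ for all σ ∈ F_n and all 1 ≤ k ≤ p−1, and every chain c ∈ C_n, one has γ(sφ)(sc) = φ(sc). -/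

import Mathlib

/-- A `ℤ_p`-chain complex (in nonnegative degrees) whose degree-`n` chain group is the
finitely generated free ℤ-module with basis `{t^k σ : σ ∈ F n, 0 ≤ k ≤ p−1}`, i.e. the
free ℤ-module on `F n × ZMod p`; the action of `t` cyclically permutes the basis, and
commutes with the boundary. Equivalently, each chain group is a finitely generated free
`ℤ[ℤ/pℤ]`-module with the generator of `ℤ/pℤ` acting as `t`. -/
structure ZpFreeComplex (p : ℕ) where
  F : ℕ → Type
  fin : ∀ n, Fintype (F n)
  bd : ∀ n, ((F (n + 1) × ZMod p → ℤ) →+ (F n × ZMod p → ℤ))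
  bd_bd : ∀ n x, bd n (bd (n + 1) x) = 0
  bd_t : ∀ n (c : F (n + 1) × ZMod p → ℤ),
    bd n (fun z => c (z.1, z.2 - 1)) = fun z => bd n c (z.1, z.2 - 1)

namespace ZpFreeComplex

variable {p : ℕ} (X : ZpFreeComplex p)

/-- degree-`n` chains -/
abbrev Ch (n : ℕ) := X.F n × ZMod p → ℤ

/-- degree-`n` integral cochains -/
abbrev Co (n : ℕ) := (X.F n × ZMod p → ℤ) →+ ℤ

/-- the chain map `t^k` -/
def tCh (n k : ℕ) : X.Ch n →+ X.Ch n where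
  toFun c := fun z => c (z.1, z.2 - (k : ZMod p))
  map_zero' := rfl
  map_add' _ _ := rfl

/-- `s = 1 + t + ⋯ + t^{p−1}` on chains -/
def sCh (n : ℕ) : X.Ch n →+ X.Ch n := ∑ k ∈ Finset.range p, X.tCh n k

/-- `d = 1 − t` on chains -/
def dCh (n : ℕ) : X.Ch n →+ X.Ch n := AddMonoidHom.id _ - X.tCh n 1

/-- the cochain map `t^k`, `φ ↦ φ ∘ t^k` -/
def tCo (n k : ℕ) : X.Co n →+ X.Co n where
  toFun φ := φ.comp (X.tCh n k)
  map_zero' := by ext x; simp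
  map_add' _ _ := by ext x; simp

/-- `s = 1 + t + ⋯ + t^{p−1}` on cochains -/
def sCo (n : ℕ) : X.Co n →+ X.Co n where
  toFun φ := φ.comp (X.sCh n)
  map_zero' := by ext x; simp
  map_add' _ _ := by ext x; simp

/-- `d = 1 − t` on cochains -/
def dCo (n : ℕ) : X.Co n →+ X.Co n where
  toFun φ := φ.comp (X.dCh n)
  map_zero' := by ext x; simp
  map_add' _ _ := by ext x; simp

/-- the coboundary `δφ = φ ∘ ∂` -/
def cb (n : ℕ) : X.Co n →+ X.Co (n + 1) where
  toFun φ := φ.comp (X.bd n)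
  map_zero' := by ext x; simp
  map_add' _ _ := by ext x; simp

/-- the boundary out of degree `n` (the zero map in degree 0). -/
def bdFrom : ∀ n : ℕ, (X.Ch n →+ X.Ch (n - 1))
  | 0 => 0
  | (j + 1) => X.bd j

lemma tCh_one (n : ℕ) (c : X.Ch n) : X.tCh n 1 c = fun z => c (z.1, z.2 - 1) := by
  funext z
  simp [tCh]

lemma tCh_succ (n k : ℕ) (c : X.Ch n) :
    X.tCh n (k + 1) c = X.tCh n 1 (X.tCh n k c) := by
  funext z
  show c (z.1, z.2 - ((k + 1 : ℕ) : ZMod p)) = c (z.1, z.2 - ((1 : ℕ) : ZMod p) - ((k : ℕ) : ZMod p))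
  have h2 : z.2 - ((k + 1 : ℕ) : ZMod p) = z.2 - ((1 : ℕ) : ZMod p) - ((k : ℕ) : ZMod p) := by
    push_cast
    ring
  rw [h2]

lemma tCh_zero (n : ℕ) (c : X.Ch n) : X.tCh n 0 c = c := by
  funext z
  simp [tCh]

lemma bd_tCh (n k : ℕ) (c : X.Ch (n + 1)) :
    X.bd n (X.tCh (n + 1) k c) = X.tCh n k (X.bd n c) := by
  induction k with
  | zero => rw [tCh_zero, tCh_zero]
  | succ k ih =>
      rw [X.tCh_succ (n + 1) k c, X.tCh_succ n k (X.bd n c)]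
      rw [X.tCh_one (n + 1) (X.tCh (n + 1) k c)]
      rw [X.bd_t n (X.tCh (n + 1) k c)]
      rw [ih]
      rw [← X.tCh_one n (X.tCh n k (X.bd n c))]

lemma bd_sCh (n : ℕ) (c : X.Ch (n + 1)) :
    X.bd n (X.sCh (n + 1) c) = X.sCh n (X.bd n c) := by
  simp only [sCh, AddMonoidHom.finset_sum_apply, map_sum, bd_tCh]

lemma bd_dCh (n : ℕ) (c : X.Ch (n + 1)) :
    X.bd n (X.dCh (n + 1) c) = X.dCh n (X.bd n c) := by
  simp only [dCh, AddMonoidHom.sub_apply, AddMonoidHom.id_apply, map_sub, bd_tCh]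

end ZpFreeComplex

namespace ZpFreeComplex

variable {p : ℕ} (X : ZpFreeComplex p)

/-- cocycles of the `d`-cochain complex `C*_d = ker d ⊆ C*` -/
def dcocycles (n : ℕ) : AddSubgroup (X.Co n) := (X.dCo n).ker ⊓ (X.cb n).ker

/-- coboundaries of the `d`-cochain complex -/
def dcobds : ∀ n : ℕ, AddSubgroup (X.Co n)
  | 0 => ⊥
  | (j + 1) => AddSubgroup.map (X.cb j) ((X.dCo j).ker)

/-- the `d`-cohomology `H^n_d` -/
abbrev Hd (n : ℕ) := X.dcocycles n ⧸ (X.dcobds n).addSubgroupOf (X.dcocycles n)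

/-- the `d`-cohomology class `[φ]_d` of a cocycle of `C*_d` -/
def clsd (n : ℕ) (φ : X.Co n) (h : φ ∈ X.dcocycles n) : X.Hd n :=
  QuotientAddGroup.mk ⟨φ, h⟩

/-- cocycles of the `s`-cochain complex `C*_s = ker s ⊆ C*` -/
def scocycles (n : ℕ) : AddSubgroup (X.Co n) := (X.sCo n).ker ⊓ (X.cb n).ker

/-- coboundaries of the `s`-cochain complex -/
def scobds : ∀ n : ℕ, AddSubgroup (X.Co n)
  | 0 => ⊥
  | (j + 1) => AddSubgroup.map (X.cb j) ((X.sCo j).ker)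

/-- the `s`-cohomology `H^n_s` -/
abbrev Hs (n : ℕ) := X.scocycles n ⧸ (X.scobds n).addSubgroupOf (X.scocycles n)

/-- the `s`-cohomology class `[φ]_s` of a cocycle of `C*_s` -/
def clss (n : ℕ) (φ : X.Co n) (h : φ ∈ X.scocycles n) : X.Hs n :=
  QuotientAddGroup.mk ⟨φ, h⟩

/-- the boundary of the `d`-chain complex `C^d = ker d ⊆ C`, i.e. the restriction
of the boundary of `C`. -/
def bdD (n : ℕ) : ↥((X.dCh (n + 1)).ker) →+ ↥((X.dCh n).ker) :=
  AddMonoidHom.codRestrict ((X.bd n).comp (X.dCh (n + 1)).ker.subtype) ((X.dCh n).ker)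
    (fun x => by
      have hx : X.dCh (n + 1) (x : X.Ch (n + 1)) = 0 := x.2
      simp only [AddMonoidHom.mem_ker, AddMonoidHom.coe_comp, AddSubgroup.coe_subtype,
        Function.comp_apply]
      rw [← bd_dCh, hx, map_zero])

/-- the boundary of the `s`-chain complex `C^s = ker s ⊆ C`, i.e. the restriction
of the boundary of `C`. -/
def bdS (n : ℕ) : ↥((X.sCh (n + 1)).ker) →+ ↥((X.sCh n).ker) :=
  AddMonoidHom.codRestrict ((X.bd n).comp (X.sCh (n + 1)).ker.subtype) ((X.sCh n).ker)
    (fun x => by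
      have hx : X.sCh (n + 1) (x : X.Ch (n + 1)) = 0 := x.2
      simp only [AddMonoidHom.mem_ker, AddMonoidHom.coe_comp, AddSubgroup.coe_subtype,
        Function.comp_apply]
      rw [← bd_sCh, hx, map_zero])

lemma cb_dCo (n : ℕ) (φ : X.Co n) :
    X.cb n (X.dCo n φ) = X.dCo (n + 1) (X.cb n φ) := by
  ext x
  show (X.dCo n φ) (X.bd n x) = (X.cb n φ) (X.dCh (n + 1) x)
  show φ (X.dCh n (X.bd n x)) = φ (X.bd n (X.dCh (n + 1) x))
  rw [bd_dCh]

lemma cb_sCo (n : ℕ) (φ : X.Co n) :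
    X.cb n (X.sCo n φ) = X.sCo (n + 1) (X.cb n φ) := by
  ext x
  show φ (X.sCh n (X.bd n x)) = φ (X.bd n (X.sCh (n + 1) x))
  rw [bd_sCh]

/-- the coboundary of `C*_d`, i.e. the restriction of the coboundary of `C*`. -/
def cbD (n : ℕ) : ↥((X.dCo n).ker) →+ ↥((X.dCo (n + 1)).ker) :=
  AddMonoidHom.codRestrict ((X.cb n).comp (X.dCo n).ker.subtype) ((X.dCo (n + 1)).ker)
    (fun φ => by
      have hφ : X.dCo n (φ : X.Co n) = 0 := φ.2
      simp only [AddMonoidHom.mem_ker, AddMonoidHom.coe_comp, AddSubgroup.coe_subtype,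
        Function.comp_apply]
      rw [← cb_dCo, hφ, map_zero])

end ZpFreeComplex

open ZpFreeComplex

section Gamma
namespace ZpFreeComplex
set_option linter.unusedSectionVars false

variable {p : ℕ} (X : ZpFreeComplex p) [NeZero p] [∀ n, Fintype (X.F n)]
  [∀ n, DecidableEq (X.F n)]

lemma sum_range_cast {M : Type*} [AddCommMonoid M] (h : ZMod p → M) :
    ∑ k ∈ Finset.range p, h (k : ZMod p) = ∑ j : ZMod p, h j := by
  refine Finset.sum_nbij' (fun k => (k : ZMod p)) (fun j => j.val) ?_ ?_ ?_ ?_ ?_ <;>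
    simp_all [ZMod.val_lt, ZMod.natCast_rightInverse _ , ZMod.val_cast_of_lt, Finset.mem_range,
      Nat.mod_eq_of_lt]

lemma sum_shift (h : ZMod p → ℤ) (j0 : ZMod p) :
    ∑ k ∈ Finset.range p, h (j0 - (k : ZMod p)) = ∑ j : ZMod p, h j := by
  rw [sum_range_cast (fun j => h (j0 - j))]
  exact Equiv.sum_comp (Equiv.subLeft j0) h

lemma dCh_apply (n : ℕ) (c : X.Ch n) (z : X.F n × ZMod p) :
    X.dCh n c z = c z - c (z.1, z.2 - 1) := by
  simp [dCh, tCh]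

lemma sCh_apply (n : ℕ) (c : X.Ch n) (z : X.F n × ZMod p) :
    X.sCh n c z = ∑ j : ZMod p, c (z.1, j) := by
  have h1 : X.sCh n c z = ∑ k ∈ Finset.range p, c (z.1, z.2 - (k : ZMod p)) := by
    simp [sCh, tCh, AddMonoidHom.finset_sum_apply, Finset.sum_apply]
  rw [h1]; exact sum_shift (fun j => c (z.1, j)) z.2

lemma mem_dCh_ker {n : ℕ} {c : X.Ch n} :
    c ∈ (X.dCh n).ker ↔ ∀ z : X.F n × ZMod p, c z = c (z.1, 0) := by
  constructor
  · intro h z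
    have h1 : ∀ w : X.F n × ZMod p, c w = c (w.1, w.2 - 1) := by
      intro w
      have h2 := congrFun (AddMonoidHom.mem_ker.mp h) w
      rw [dCh_apply] at h2
      have h3 : (0 : X.Ch n) w = 0 := rfl
      omega
    have key : ∀ m : ℕ, c z = c (z.1, z.2 - m) := by
      intro m; induction m with
      | zero => simp
      | succ m ih =>
          rw [ih, h1 (z.1, z.2 - m)]
          have h4 : z.2 - (m : ZMod p) - 1 = z.2 - ((m + 1 : ℕ) : ZMod p) := by
            push_cast; ring
          rw [h4]
    have h5 := key z.2.val
    rwa [ZMod.natCast_rightInverse z.2, sub_self] at h5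
  · intro h
    rw [AddMonoidHom.mem_ker]; funext z
    rw [dCh_apply, h z, h (z.1, z.2 - 1)]
    simp

lemma co_expand (n : ℕ) (φ : X.Co n) (c : X.Ch n) :
    φ c = ∑ z : X.F n × ZMod p, c z * φ (Pi.single z 1) := by
  conv_lhs => rw [← Finset.univ_sum_single c]
  rw [map_sum]
  refine Finset.sum_congr rfl fun z _ => ?_
  have h1 : (Pi.single z (c z) : X.Ch n) = c z • Pi.single z (1 : ℤ) := by
    rw [← Pi.single_smul]; norm_num
  rw [h1, map_zsmul, smul_eq_mul]

lemma tCh_single (n : ℕ) (σ : X.F n) (j : ZMod p) :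
    X.tCh n 1 (Pi.single (σ, j) 1) = Pi.single (σ, j + 1) (1 : ℤ) := by
  funext z
  show (Pi.single (σ, j) 1 : X.Ch n) (z.1, z.2 - ((1 : ℕ) : ZMod p)) = _
  rw [Pi.single_apply, Pi.single_apply]
  congr 1
  simp [Prod.ext_iff, sub_eq_iff_eq_add, eq_iff_iff]

lemma mem_dCo_ker {n : ℕ} {φ : X.Co n} :
    φ ∈ (X.dCo n).ker ↔
      ∀ z : X.F n × ZMod p, φ (Pi.single z 1) = φ (Pi.single (z.1, 0) 1) := by
  constructor
  · intro h z
    have h1 : ∀ i : ZMod p, φ (Pi.single (z.1, i) 1) = φ (Pi.single (z.1, i + 1) 1) := by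
      intro i
      have h0 : X.dCo n φ = 0 := h
      have hc : φ (X.dCh n (Pi.single (z.1, i) 1)) = 0 := by
        have := congrFun (congrArg (fun (ψ : X.Co n) => ψ.toFun) h0) (Pi.single (z.1, i) 1)
        exact this
      have hd : X.dCh n (Pi.single (z.1, i) 1)
          = Pi.single (z.1, i) 1 - Pi.single (z.1, i + 1) 1 := by
        have : X.dCh n (Pi.single (z.1, i) 1)
            = Pi.single (z.1, i) 1 - X.tCh n 1 (Pi.single (z.1, i) 1) := rfl
        rw [this, tCh_single]
      rw [hd, map_sub, sub_eq_zero] at hc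
      exact hc
    have key : ∀ m : ℕ, φ (Pi.single (z.1, z.2) 1) = φ (Pi.single (z.1, z.2 + m) 1) := by
      intro m; induction m with
      | zero => simp
      | succ m ih =>
          rw [ih, h1 (z.2 + m)]
          have h4 : z.2 + (m : ZMod p) + 1 = z.2 + ((m + 1 : ℕ) : ZMod p) := by
            push_cast; ring
          rw [h4]
    have h5 := key (-z.2).val
    rw [ZMod.natCast_rightInverse (-z.2), add_neg_cancel] at h5
    simpa using h5
  · intro h
    rw [AddMonoidHom.mem_ker]
    refine AddMonoidHom.ext fun c => ?_
    show φ (X.dCh n c) = (0 : X.Co n) c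
    have h0 : (0 : X.Co n) c = 0 := rfl
    rw [h0, co_expand]
    have step : ∀ z : X.F n × ZMod p,
        X.dCh n c z * φ (Pi.single z 1)
          = c z * φ (Pi.single (z.1, (0 : ZMod p)) 1)
            - c (z.1, z.2 - 1) * φ (Pi.single (z.1, (0 : ZMod p)) 1) := by
      intro z
      rw [dCh_apply, h z, sub_mul]
    rw [Finset.sum_congr rfl fun z _ => step z, Finset.sum_sub_distrib, sub_eq_zero]
    exact (Equiv.sum_comp ((Equiv.refl (X.F n)).prodCongr (Equiv.subRight (1 : ZMod p)))
      (fun w : X.F n × ZMod p => c w * φ (Pi.single (w.1, (0 : ZMod p)) 1))).symm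


def Phi (n : ℕ) (a : X.F n → ℤ) : X.Co n where
  toFun c := ∑ z : X.F n × ZMod p, a z.1 * c z
  map_zero' := by simp
  map_add' c d := by simp [mul_add, Finset.sum_add_distrib]

lemma Phi_single (n : ℕ) (a : X.F n → ℤ) (w : X.F n × ZMod p) :
    X.Phi n a (Pi.single w 1) = a w.1 := by
  show ∑ z : X.F n × ZMod p, a z.1 * (Pi.single w 1 : X.Ch n) z = a w.1
  simp [Pi.single_apply, mul_ite, Finset.sum_ite_eq']

/-- `c ↦ (σ ↦ c (σ, 0))` as a linear equivalence. -/
def eCh (n : ℕ) : ↥((X.dCh n).ker) ≃ₗ[ℤ] (X.F n → ℤ) where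
  toFun x := fun σ => (x : X.Ch n) (σ, 0)
  map_add' x y := rfl
  map_smul' m x := rfl
  invFun a := ⟨fun z => a z.1, (X.mem_dCh_ker).mpr fun z => rfl⟩
  left_inv x := Subtype.ext (funext fun z => ((X.mem_dCh_ker).mp x.2 z).symm)
  right_inv a := rfl

/-- the basis `{sσ}` of `C^d_n` -/
noncomputable def bCh (n : ℕ) : Module.Basis (X.F n) ℤ ↥((X.dCh n).ker) := Module.Basis.ofEquivFun (X.eCh n)

lemma bCh_coe (n : ℕ) (σ : X.F n) :
    ((X.bCh n σ : ↥((X.dCh n).ker)) : X.Ch n) = fun (z : X.F n × ZMod p) => (Pi.single σ (1 : ℤ) : X.F n → ℤ) z.1 := by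
  rw [bCh]
  rw [congrFun (Module.Basis.coe_ofEquivFun (X.eCh n)) σ]
  rfl

/-- `φ ↦ (σ ↦ φ (σ,0)*)` as a linear equivalence. -/
def eCo (n : ℕ) : ↥((X.dCo n).ker) ≃ₗ[ℤ] (X.F n → ℤ) where
  toFun φ := fun σ => (φ : X.Co n) (Pi.single (σ, (0 : ZMod p)) 1)
  map_add' φ ψ := rfl
  map_smul' m φ := rfl
  invFun a := ⟨X.Phi n a, (X.mem_dCo_ker).mpr fun (z : X.F n × ZMod p) => by rw [Phi_single, Phi_single]⟩
  left_inv φ := Subtype.ext (AddMonoidHom.ext fun c => by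
    show ∑ z : X.F n × ZMod p, (φ : X.Co n) (Pi.single (z.1, (0 : ZMod p)) 1) * c z
        = (φ : X.Co n) c
    rw [co_expand X n (φ : X.Co n) c]
    exact Finset.sum_congr rfl fun z _ => by
      rw [(X.mem_dCo_ker).mp φ.2 z, mul_comm])
  right_inv a := funext fun σ => X.Phi_single n a (σ, 0)

/-- the basis `{sσ*}` of `C^n_d` -/
noncomputable def bCo (n : ℕ) : Module.Basis (X.F n) ℤ ↥((X.dCo n).ker) := Module.Basis.ofEquivFun (X.eCo n)

lemma bCo_coe (n : ℕ) (σ : X.F n) :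
    ((X.bCo n σ : ↥((X.dCo n).ker)) : X.Co n) = X.Phi n (Pi.single σ 1) := by
  rw [bCo]
  rw [congrFun (Module.Basis.coe_ofEquivFun (X.eCo n)) σ]
  rfl

/-- `γ(α)` as a functional on `C^d_n`. -/
def gammaFun (n : ℕ) (α : ↥((X.dCo n).ker)) : ↥((X.dCh n).ker) →+ ℤ where
  toFun x := ∑ σ : X.F n, (α : X.Co n) (Pi.single (σ, (0 : ZMod p)) 1) * (x : X.Ch n) (σ, 0)
  map_zero' := by simp
  map_add' x y := by
    have : ((x + y : ↥((X.dCh n).ker)) : X.Ch n) = (x : X.Ch n) + (y : X.Ch n) := rfl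
    simp [this, mul_add, Finset.sum_add_distrib]

lemma bCh_sum (n : ℕ) (x : ↥((X.dCh n).ker)) :
    ∑ σ : X.F n, ((x : X.Ch n) (σ, 0)) • X.bCh n σ = x := by
  have h := Module.Basis.sum_repr (X.bCh n) x
  have h2 : ∀ σ, (X.bCh n).repr x σ = (x : X.Ch n) (σ, 0) := fun σ => by
    rw [bCh, Module.Basis.ofEquivFun_repr_apply]; rfl
  have h3 : ∑ σ : X.F n, ((x : X.Ch n) (σ, 0)) • X.bCh n σ
      = ∑ σ : X.F n, ((X.bCh n).repr x σ) • X.bCh n σ :=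
    Finset.sum_congr rfl fun σ _ => by rw [h2 σ]
  rw [h3, h]

lemma gammaFun_bCh (n : ℕ) (α : ↥((X.dCo n).ker)) (σ : X.F n) :
    X.gammaFun n α (X.bCh n σ) = (α : X.Co n) (Pi.single (σ, (0 : ZMod p)) 1) := by
  show ∑ τ : X.F n, (α : X.Co n) (Pi.single (τ, (0 : ZMod p)) 1)
      * ((X.bCh n σ : ↥((X.dCh n).ker)) : X.Ch n) (τ, 0) = _
  simp only [X.bCh_coe n σ]
  simp [Pi.single_apply, mul_ite, Finset.sum_ite_eq']

/-- the isomorphism `γ`. -/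
noncomputable def gamma (n : ℕ) : ↥((X.dCo n).ker) ≃+ (↥((X.dCh n).ker) →+ ℤ) where
  toFun := X.gammaFun n
  invFun f := (X.eCo n).symm (fun σ => f (X.bCh n σ))
  left_inv α := by
    have h : (fun σ => X.gammaFun n α (X.bCh n σ)) = X.eCo n α :=
      funext fun σ => X.gammaFun_bCh n α σ
    show (X.eCo n).symm (fun σ => X.gammaFun n α (X.bCh n σ)) = α
    rw [h, LinearEquiv.symm_apply_apply]
  right_inv f := by
    refine AddMonoidHom.ext fun x => ?_
    have hval : ∀ σ, ((X.eCo n).symm (fun τ => f (X.bCh n τ)) : X.Co n)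
        (Pi.single (σ, (0 : ZMod p)) 1) = f (X.bCh n σ) := fun σ =>
      X.Phi_single n (fun τ => f (X.bCh n τ)) (σ, 0)
    show ∑ σ : X.F n, ((X.eCo n).symm (fun τ => f (X.bCh n τ)) : X.Co n)
        (Pi.single (σ, (0 : ZMod p)) 1) * (x : X.Ch n) (σ, 0) = f x
    rw [Finset.sum_congr rfl fun σ _ => by rw [hval]]
    conv_rhs => rw [← X.bCh_sum n x]
    rw [map_sum]
    exact Finset.sum_congr rfl fun σ _ => by rw [map_zsmul, smul_eq_mul, mul_comm]
  map_add' α β := by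
    refine AddMonoidHom.ext fun x => ?_
    have h : ((α + β : ↥((X.dCo n).ker)) : X.Co n) = (α : X.Co n) + (β : X.Co n) := rfl
    show ∑ σ : X.F n, ((α + β : ↥((X.dCo n).ker)) : X.Co n) (Pi.single (σ, (0 : ZMod p)) 1)
        * (x : X.Ch n) (σ, 0) = _
    simp only [h, AddMonoidHom.add_apply, add_mul, Finset.sum_add_distrib]
    rfl

lemma gamma_apply (n : ℕ) (α : ↥((X.dCo n).ker)) (x : ↥((X.dCh n).ker)) :
    X.gamma n α x
      = ∑ σ : X.F n, (α : X.Co n) (Pi.single (σ, (0 : ZMod p)) 1) * (x : X.Ch n) (σ, 0) := rfl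

/-- the key characterization: `p • γ(α)(x) = α(x)`. -/
lemma pgamma (n : ℕ) (α : ↥((X.dCo n).ker)) (x : ↥((X.dCh n).ker)) :
    (p : ℤ) * X.gamma n α x = (α : X.Co n) (x : X.Ch n) := by
  rw [co_expand X n (α : X.Co n) (x : X.Ch n)]
  have step : ∀ z : X.F n × ZMod p,
      (x : X.Ch n) z * (α : X.Co n) (Pi.single z 1)
        = (x : X.Ch n) (z.1, 0) * (α : X.Co n) (Pi.single (z.1, (0 : ZMod p)) 1) := by
    intro z
    rw [(X.mem_dCh_ker).mp x.2 z, (X.mem_dCo_ker).mp α.2 z]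
  rw [Finset.sum_congr rfl fun z _ => step z, Fintype.sum_prod_type]
  rw [gamma_apply, Finset.mul_sum]
  refine Finset.sum_congr rfl fun σ _ => ?_
  simp only [Finset.sum_const, Finset.card_univ, ZMod.card, nsmul_eq_mul]
  push_cast
  ring

lemma bCh_repr (n : ℕ) (x : ↥((X.dCh n).ker)) (σ : X.F n) :
    (X.bCh n).repr x σ = (x : X.Ch n) (σ, 0) := by
  rw [bCh, Module.Basis.ofEquivFun_repr_apply]; rfl

lemma sCh_sCh (n : ℕ) (c : X.Ch n) :
    X.sCh n (X.sCh n c) = (p : ℤ) • X.sCh n c := by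
  funext z
  rw [X.sCh_apply n (X.sCh n c) z]
  have h : ∀ j : ZMod p, X.sCh n c (z.1, j) = ∑ i : ZMod p, c (z.1, i) :=
    fun j => X.sCh_apply n c (z.1, j)
  rw [Finset.sum_congr rfl fun j _ => h j, Finset.sum_const, Finset.card_univ, ZMod.card]
  show (p : ℕ) • ∑ i : ZMod p, c (z.1, i) = ((p : ℤ) • X.sCh n c) z
  rw [Pi.smul_apply, X.sCh_apply n c z, nsmul_eq_mul, smul_eq_mul]

end ZpFreeComplex
end Gamma


/-- **The isomorphism `γ : C*_d ≅ Hom(C^d, ℤ)`.**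
Let `K` be a `ℤ_p`-chain complex with fundamental-domain bases (degree-`n` chain group
free on `{t^k σ : σ ∈ F_n, 0 ≤ k ≤ p−1}`, modelled as `F n × ZMod p → ℤ`, with `t`
cyclically shifting the second coordinate and `σ* = `evaluation at `(σ,0)` the dual-basis
cochain).  Give `Hom(C^d, ℤ)` the coboundary dual to the restricted boundary of
`C^d = ker d`.  Then `{sσ : σ ∈ F_n}` is a basis of `C^d_n`, `{sσ* : σ ∈ F_n}` is a
basis of `C^n_d = ker d ⊆ C^n`, and the homomorphism `γ` determined by
`γ(sσ*) = (sσ)*` is an isomorphism of cochain complexes.  Moreover for every cochain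
`φ ∈ C^n` vanishing on `t^k σ` for all `σ ∈ F_n`, `1 ≤ k ≤ p−1`, and every chain
`c ∈ C_n`, one has `γ(sφ)(sc) = φ(sc)`. -/
theorem gamma_isomorphism_of_d_cochains
    (p : ℕ) (hp : p.Prime) (X : ZpFreeComplex p) [∀ n, DecidableEq (X.F n)] :
    ∃ (b : ∀ n, Module.Basis (X.F n) ℤ ↥((X.dCh n).ker))
      (b' : ∀ n, Module.Basis (X.F n) ℤ ↥((X.dCo n).ker))
      (γ : ∀ n, ↥((X.dCo n).ker) ≃+ (↥((X.dCh n).ker) →+ ℤ)),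
      (∀ n (σ : X.F n), ((b n σ : X.Ch n)) = X.sCh n (Pi.single (σ, (0 : ZMod p)) (1 : ℤ)))
      ∧ (∀ n (σ : X.F n), ((b' n σ : X.Co n)) =
          X.sCo n (Pi.evalAddMonoidHom (fun _ : X.F n × ZMod p => ℤ) (σ, (0 : ZMod p))))
      ∧ (∀ n (σ : X.F n), γ n (b' n σ) = ((b n).coord σ).toAddMonoidHom)
      ∧ (∀ n (α : ↥((X.dCo n).ker)),
          γ (n + 1) (X.cbD n α) = (γ n α).comp (X.bdD n))
      ∧ (∀ n (φ : X.Co n),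
          (∀ (σ : X.F n) (k : ZMod p), k ≠ 0 → φ (Pi.single (σ, k) (1 : ℤ)) = 0) →
          ∀ (c : X.Ch n) (hφ : X.sCo n φ ∈ (X.dCo n).ker) (hc : X.sCh n c ∈ (X.dCh n).ker),
            γ n ⟨X.sCo n φ, hφ⟩ ⟨X.sCh n c, hc⟩ = φ (X.sCh n c)) := by
  haveI : NeZero p := ⟨hp.ne_zero⟩
  haveI : ∀ n, Fintype (X.F n) := X.fin
  have hne : (p : ℤ) ≠ 0 := by exact_mod_cast hp.ne_zero
  refine ⟨fun n => X.bCh n, fun n => X.bCo n, fun n => X.gamma n, ?_, ?_, ?_, ?_, ?_⟩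
  · intro n σ
    rw [X.bCh_coe n σ]
    funext z
    rw [X.sCh_apply]
    by_cases hz : z.1 = σ <;>
      simp [Pi.single_apply, Prod.ext_iff, hz]
  · intro n σ
    rw [X.bCo_coe n σ]
    refine AddMonoidHom.ext fun c => ?_
    show ∑ z : X.F n × ZMod p, (Pi.single σ 1 : X.F n → ℤ) z.1 * c z = _
    have hR : X.sCo n (Pi.evalAddMonoidHom (fun _ : X.F n × ZMod p => ℤ) (σ, 0)) c
        = X.sCh n c (σ, 0) := rfl
    rw [hR, X.sCh_apply, Fintype.sum_prod_type]
    rw [Finset.sum_eq_single σ]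
    · simp
    · intro b _ hb
      simp [Pi.single_apply, hb]
    · intro hmem
      exact absurd (Finset.mem_univ σ) hmem
  · intro n σ
    refine AddMonoidHom.ext fun x => ?_
    show X.gamma n (X.bCo n σ) x = ((X.bCh n).coord σ) x
    rw [Module.Basis.coord_apply, X.bCh_repr, X.gamma_apply]
    simp only [X.bCo_coe n σ]
    have h1 : ∀ τ : X.F n, X.Phi n (Pi.single σ 1) (Pi.single (τ, (0 : ZMod p)) 1)
        = (Pi.single σ 1 : X.F n → ℤ) τ := fun τ => X.Phi_single n (Pi.single σ 1) (τ, 0)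
    rw [Finset.sum_congr rfl fun τ _ => by rw [h1 τ]]
    simp [Pi.single_apply, ite_mul, Finset.sum_ite_eq']
  · intro n α
    refine AddMonoidHom.ext fun x => ?_
    apply mul_left_cancel₀ hne
    have h2 : ((X.gamma n α).comp (X.bdD n)) x = X.gamma n α (X.bdD n x) := rfl
    rw [h2, X.pgamma, X.pgamma]
    rfl
  · intro n φ hvan c hφ hc
    apply mul_left_cancel₀ hne
    rw [X.pgamma]
    have h1 : ((⟨X.sCo n φ, hφ⟩ : ↥((X.dCo n).ker)) : X.Co n)
        ((⟨X.sCh n c, hc⟩ : ↥((X.dCh n).ker)) : X.Ch n)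
        = φ (X.sCh n (X.sCh n c)) := rfl
    rw [h1, X.sCh_sCh, map_zsmul, smul_eq_mul]
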